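/- The forgetful functor from the category of ffg-Elgot algebras for F to the base variety C creates sifted colimits: given a sifted diagram of ffg-Elgot algebras whose underlying diagram in C has a colimit, there is a unique ffg-Elgot algebra structure on the colimit making all colimit injections solution-preserving, and this is a colimit in the category of ffg-Elgot algebras. -/

import Mathlib

open CategoryTheory CategoryTheory.Limits Opposite

universe v u

variable {C : Type u} [Category.{v} C] [HasBinaryCoproducts C]

/-- `h • e`, renaming of parameters in an equation morphism. -/
noncomputable def bullet (F : C ⥤ C) {X A B : C} (e : X ⟶ F.obj X ⨿ A) (h : A ⟶ B) :
    X ⟶ F.obj X ⨿ B :=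
  e ≫ coprod.map (𝟙 (F.obj X)) h

/-- `e ▫ f`, the combination of two equation morphisms. -/
noncomputable def square (F : C ⥤ C) {X Y Z : C} (e : X ⟶ F.obj X ⨿ Y)
    (f : Y ⟶ F.obj Y ⨿ Z) : X ⨿ Y ⟶ F.obj (X ⨿ Y) ⨿ Z :=
  coprod.desc e coprod.inr ≫ coprod.map (𝟙 (F.obj X)) f ≫
    coprod.desc (F.map coprod.inl ≫ coprod.inl) (coprod.map (F.map coprod.inr) (𝟙 Z))

/-- `w ▫ c`, combining an equation `w : X ⟶ FX + V` with a coalgebra `c : V ⟶ FV`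
into a coalgebra on `X + V`. -/
noncomputable def squareC (F : C ⥤ C) {X V : C} (w : X ⟶ F.obj X ⨿ V) (c : V ⟶ F.obj V) :
    X ⨿ V ⟶ F.obj (X ⨿ V) :=
  coprod.desc w coprod.inr ≫ coprod.map (𝟙 (F.obj X)) c ≫
    coprod.desc (F.map coprod.inl) (F.map coprod.inr)

/-- The type of solution operators on `A`, assigning morphisms to ffg-equations. -/
abbrev SolOp (F : C ⥤ C) (FFG : C → Prop) (A : C) : Type _ :=
  ∀ ⦃X : C⦄, FFG X → (X ⟶ F.obj X ⨿ A) → (X ⟶ A)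

/-- `(A, a, sol)` is an ffg-Elgot algebra: `sol` assigns to every ffg-equation a solution,
subject to Weak Functoriality and Compositionality. -/
structure IsSolutionOp (F : C ⥤ C) (FFG : C → Prop) {A : C} (a : F.obj A ⟶ A)
    (sol : SolOp F FFG A) : Prop where
  solves : ∀ {X : C} (hX : FFG X) (e : X ⟶ F.obj X ⨿ A),
    sol hX e = e ≫ coprod.map (F.map (sol hX e)) (𝟙 A) ≫ coprod.desc a (𝟙 A)
  weakFunctorial : ∀ {X Y Z : C} (hX : FFG X) (hY : FFG Y), FFG Z →
    ∀ (e : X ⟶ F.obj X ⨿ Z) (f : Y ⟶ F.obj Y ⨿ Z) (m : X ⟶ Y),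
      e ≫ coprod.map (F.map m) (𝟙 Z) = m ≫ f →
      ∀ h : Z ⟶ A, sol hX (bullet F e h) = m ≫ sol hY (bullet F f h)
  compositional : ∀ {X Y : C} (hX : FFG X) (hY : FFG Y) (hXY : FFG (X ⨿ Y))
    (e : X ⟶ F.obj X ⨿ Y) (f : Y ⟶ F.obj Y ⨿ A),
      sol hX (bullet F e (sol hY f)) = coprod.inl ≫ sol hXY (square F e f)

/-- `h : A ⟶ B` preserves solutions. -/
def SolPres (F : C ⥤ C) (FFG : C → Prop) {A B : C}
    (solA : SolOp F FFG A) (solB : SolOp F FFG B) (h : A ⟶ B) : Prop :=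
  ∀ ⦃X : C⦄ (hX : FFG X) (e : X ⟶ F.obj X ⨿ A),
    solB hX (bullet F e h) = solA hX e ≫ h

/-- The category of `F`-coalgebras with carrier satisfying `FFG`. -/
abbrev FFGCoalg (F : C ⥤ C) (FFG : C → Prop) : Type _ :=
  ObjectProperty.FullSubcategory (fun c : Endofunctor.Coalgebra F => FFG c.V)

/-- The inclusion diagram of ffg-carried coalgebras into `C`. -/
noncomputable def coalgDiagram (F : C ⥤ C) (FFG : C → Prop) : FFGCoalg F FFG ⥤ C :=
  ObjectProperty.ι _ ⋙ Endofunctor.Coalgebra.forget F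

/-- The canonical diagram of ffg objects over `A`. -/
noncomputable def canonicalDiagram (FFG : C → Prop) (A : C) :
    ObjectProperty.FullSubcategory (fun p : Over A => FFG p.left) ⥤ C :=
  ObjectProperty.ι _ ⋙ Over.forget A

/-- The canonical cocone on the canonical diagram of ffg objects over `A`. -/
noncomputable def canonicalCocone (FFG : C → Prop) (A : C) :
    Cocone (canonicalDiagram FFG A) where
  pt := A
  ι :=
    { app := fun p => p.obj.hom
      naturality := by
        intro p q f
        simp only [canonicalDiagram, Functor.comp_map, Functor.const_obj_obj,
          Functor.const_obj_map, Category.comp_id]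
        simpa using Over.w f.hom }

/-- The endofunctor `F(-) + Y`. -/
noncomputable def withParam (F : C ⥤ C) (Y : C) : C ⥤ C where
  obj X := F.obj X ⨿ Y
  map f := coprod.map (F.map f) (𝟙 Y)
  map_id := by intros; simp
  map_comp := by intros; simp


section Aux
variable {J : Type v} [SmallCategory J] {D : J ⥤ C}

/-- The diagram `j ↦ A ⨿ D.obj j`. -/
noncomputable def coprodDiag (A : C) (D : J ⥤ C) : J ⥤ C where
  obj j := A ⨿ D.obj j
  map f := coprod.map (𝟙 A) (D.map f)
  map_id j := by simp
  map_comp f g := by rw [coprod.map_map]; simp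

/-- The coproduct cocone. -/
noncomputable def coprodCocone (A : C) (K : Cocone D) : Cocone (coprodDiag A D) where
  pt := A ⨿ K.pt
  ι :=
    { app := fun j => coprod.map (𝟙 A) (K.ι.app j)
      naturality := fun j j' f => by
        dsimp [coprodDiag]
        rw [coprod.map_map]
        simp }

noncomputable def innerCocone (A : C) (s : Cocone (coprodDiag A D)) : Cocone D where
  pt := s.pt
  ι :=
    { app := fun j => coprod.inr ≫ s.ι.app j
      naturality := fun j j' f => by
        dsimp
        rw [← s.w f]
        dsimp [coprodDiag]
        simp }

noncomputable def coprodCoconeIsColimit [IsConnected J] (A : C) {K : Cocone D}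
    (hK : IsColimit K) : IsColimit (coprodCocone A K) := by
  have hconst : ∀ (s : Cocone (coprodDiag A D)) (j j' : J),
      coprod.inl ≫ s.ι.app j = coprod.inl ≫ s.ι.app j' := by
    intro s
    refine constant_of_preserves_morphisms (fun j => coprod.inl ≫ s.ι.app j) ?_
    intro j j' f
    show coprod.inl ≫ s.ι.app j = coprod.inl ≫ s.ι.app j'
    rw [← s.w f]
    dsimp [coprodDiag]
    rw [← Category.assoc, coprod.inl_map]
    simp
  have hne : Nonempty J := inferInstance
  have j₀ : J := Classical.choice hne
  refine
    { desc := fun s => coprod.desc (coprod.inl ≫ s.ι.app j₀) (hK.desc (innerCocone A s))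
      fac := ?_
      uniq := ?_ }
  · intro s j
    dsimp [coprodCocone]
    apply coprod.hom_ext
    · erw [← Category.assoc, coprod.inl_map, Category.assoc, coprod.inl_desc,
        Category.id_comp]
      exact (hconst s j j₀).symm
    · have h := hK.fac (innerCocone A s) j
      dsimp [innerCocone] at h
      erw [← Category.assoc, coprod.inr_map, Category.assoc, coprod.inr_desc]
      exact h
  · intro s m hm
    apply coprod.hom_ext
    · erw [coprod.inl_desc]
      have h := hm j₀
      dsimp [coprodCocone] at h
      erw [← h, ← Category.assoc, coprod.inl_map, Category.id_comp]
    · erw [coprod.inr_desc]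
      refine hK.uniq (innerCocone A s) _ (fun j => ?_)
      dsimp [innerCocone]
      have h := hm j
      dsimp [coprodCocone] at h
      rw [← h]
      erw [coprod.inr_map_assoc]

lemma coprod_surj [IsConnected J] {K : Cocone D} (hK : IsColimit K)
    {X : C} (hco : PreservesColimitsOfShape J (coyoneda.obj (op X)))
    (A : C) (g : X ⟶ A ⨿ K.pt) :
    ∃ (j : J) (g' : X ⟶ A ⨿ D.obj j), g' ≫ coprod.map (𝟙 A) (K.ι.app j) = g := by
  have hc := isColimitOfPreserves (coyoneda.obj (op X)) (coprodCoconeIsColimit A hK)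
  obtain ⟨j, y, hy⟩ := Types.jointly_surjective _ hc g
  exact ⟨j, y, hy⟩

omit [HasBinaryCoproducts C] in
lemma hom_surj {K : Cocone D} (hK : IsColimit K)
    {Z : C} (hco : PreservesColimitsOfShape J (coyoneda.obj (op Z)))
    (g : Z ⟶ K.pt) : ∃ (j : J) (g' : Z ⟶ D.obj j), g' ≫ K.ι.app j = g := by
  have hc := isColimitOfPreserves (coyoneda.obj (op Z)) hK
  obtain ⟨j, y, hy⟩ := Types.jointly_surjective _ hc g
  exact ⟨j, y, hy⟩

lemma coprod_welldef [IsConnected J] {K : Cocone D} (hK : IsColimit K)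
    {X : C} (hco : PreservesColimitsOfShape J (coyoneda.obj (op X)))
    (A : C) {T : Type v} (Φ : ∀ j : J, (X ⟶ A ⨿ D.obj j) → T)
    (hΦ : ∀ (j j' : J) (f : j ⟶ j') (g : X ⟶ A ⨿ D.obj j),
      Φ j g = Φ j' (g ≫ coprod.map (𝟙 A) (D.map f)))
    {j j' : J} {g : X ⟶ A ⨿ D.obj j} {g' : X ⟶ A ⨿ D.obj j'}
    (h : g ≫ coprod.map (𝟙 A) (K.ι.app j) = g' ≫ coprod.map (𝟙 A) (K.ι.app j')) :
    Φ j g = Φ j' g' := by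
  have hc := isColimitOfPreserves (coyoneda.obj (op X)) (coprodCoconeIsColimit A hK)
  let s : Cocone (coprodDiag A D ⋙ coyoneda.obj (op X)) :=
    { pt := T
      ι :=
        { app := fun j => TypeCat.ofHom (Φ j)
          naturality := fun j j' f => by
            ext g
            exact (hΦ j j' f g).symm } }
  calc Φ j g = hc.desc s (g ≫ coprod.map (𝟙 A) (K.ι.app j)) := by
        exact (ConcreteCategory.congr_hom (hc.fac s j) g).symm
    _ = hc.desc s (g' ≫ coprod.map (𝟙 A) (K.ι.app j')) := by exact congrArg (ConcreteCategory.hom (hc.desc s)) h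
    _ = Φ j' g' := by exact ConcreteCategory.congr_hom (hc.fac s j') g'

end Aux

/-- The forgetful functor from ffg-Elgot algebras to the base variety creates sifted
colimits: given a sifted diagram of ffg-Elgot algebras and a colimit of the underlying
diagram, there is a unique ffg-Elgot algebra structure on the colimit making all colimit
injections solution-preserving, and it is a colimit in the category of ffg-Elgot
algebras. -/
theorem forget_creates_sifted_colimits
    (F : C ⥤ C) (FFG : C → Prop)
    {J : Type v} [SmallCategory J] [IsSifted J]
    -- F preserves sifted colimits, hom-functors of ffg objects preserve sifted colimits
    (hFpres : Nonempty (PreservesColimitsOfShape J F))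
    (hpp : ∀ X : C, FFG X →
      Nonempty (PreservesColimitsOfShape J (coyoneda.obj (op X))))
    -- a sifted diagram of ffg-Elgot algebras
    (D : J ⥤ C)
    (a : ∀ j : J, F.obj (D.obj j) ⟶ D.obj j)
    (sol : ∀ j : J, SolOp F FFG (D.obj j))
    (hop : ∀ j : J, IsSolutionOp F FFG (a j) (sol j))
    (hconn : ∀ {j j' : J} (f : j ⟶ j'),
      (a j ≫ D.map f = F.map (D.map f) ≫ a j') ∧
      SolPres F FFG (sol j) (sol j') (D.map f))
    -- a colimit of the underlying diagram in C
    (K : Cocone D) (hK : IsColimit K) :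
    ∃ aP : F.obj K.pt ⟶ K.pt,
      -- the unique F-algebra structure making the injections homomorphisms
      (∀ j : J, a j ≫ K.ι.app j = F.map (K.ι.app j) ≫ aP) ∧
      (∀ aP' : F.obj K.pt ⟶ K.pt,
        (∀ j : J, a j ≫ K.ι.app j = F.map (K.ι.app j) ≫ aP') → aP' = aP) ∧
      ∃ solP : SolOp F FFG K.pt,
        IsSolutionOp F FFG aP solP ∧
        -- all colimit injections are solution-preserving
        (∀ j : J, SolPres F FFG (sol j) solP (K.ι.app j)) ∧
        -- uniqueness of the solution operator
        (∀ solP' : SolOp F FFG K.pt, IsSolutionOp F FFG aP solP' →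
          (∀ j : J, SolPres F FFG (sol j) solP' (K.ι.app j)) → solP' = solP) ∧
        -- the lifted cocone is a colimit in the category of ffg-Elgot algebras
        (∀ {B : C} (b : F.obj B ⟶ B) (solB : SolOp F FFG B),
          IsSolutionOp F FFG b solB →
          ∀ m : ∀ j : J, D.obj j ⟶ B,
            (∀ j, SolPres F FFG (sol j) solB (m j)) →
            (∀ {j j' : J} (f : j ⟶ j'), D.map f ≫ m j' = m j) →
            ∃! h : K.pt ⟶ B,
              SolPres F FFG solP solB h ∧ ∀ j : J, K.ι.app j ≫ h = m j) := by
  classical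
  haveI := hFpres.some
  have hFK : IsColimit (F.mapCocone K) := isColimitOfPreserves F hK
  let ca : Cocone (D ⋙ F) :=
    { pt := K.pt
      ι :=
        { app := fun j => a j ≫ K.ι.app j
          naturality := fun j j' f => by
            dsimp
            rw [← Category.assoc, ← (hconn f).1, Category.assoc, K.w f, Category.comp_id] } }
  let aP : F.obj K.pt ⟶ K.pt := hFK.desc ca
  have haP : ∀ j, a j ≫ K.ι.app j = F.map (K.ι.app j) ≫ aP := fun j => (hFK.fac ca j).symm
  have haPuniq : ∀ aP', (∀ j, a j ≫ K.ι.app j = F.map (K.ι.app j) ≫ aP') → aP' = aP :=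
    fun aP' h => hFK.uniq ca aP' (fun j => (h j).symm)
  -- factorization of ffg-equations through the diagram
  have hfact : ∀ {X : C} (hX : FFG X) (e : X ⟶ F.obj X ⨿ K.pt),
      ∃ (j : J) (e' : X ⟶ F.obj X ⨿ D.obj j),
        e' ≫ coprod.map (𝟙 (F.obj X)) (K.ι.app j) = e :=
    fun {X} hX e => coprod_surj hK (hpp X hX).some _ e
  -- the solution operator on the colimit
  let solP : SolOp F FFG K.pt := fun X hX e =>
    sol (hfact hX e).choose hX (hfact hX e).choose_spec.choose ≫
      K.ι.app (hfact hX e).choose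
  -- key well-definedness lemma
  have hkey : ∀ {X : C} (hX : FFG X) (j : J) (e' : X ⟶ F.obj X ⨿ D.obj j),
      solP hX (bullet F e' (K.ι.app j)) = sol j hX e' ≫ K.ι.app j := by
    intro X hX j e'
    refine coprod_welldef hK (hpp X hX).some (F.obj X)
      (fun j g => sol j hX g ≫ K.ι.app j) ?_ ?_
    · intro j j' f g
      have hwf : sol j' hX (bullet F g (D.map f)) = sol j hX g ≫ D.map f := (hconn f).2 hX g
      show sol j hX g ≫ K.ι.app j = sol j' hX (g ≫ coprod.map (𝟙 (F.obj X)) (D.map f)) ≫ K.ι.app j'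
      rw [show g ≫ coprod.map (𝟙 (F.obj X)) (D.map f) = bullet F g (D.map f) from rfl, hwf,
        Category.assoc, K.w f]
    · rw [(hfact hX (bullet F e' (K.ι.app j))).choose_spec.choose_spec]
      rfl
  -- the injections preserve solutions
  have hpres : ∀ j, SolPres F FFG (sol j) solP (K.ι.app j) := fun j X hX e => hkey hX j e
  -- bullet composition
  have hbul : ∀ {X A B B' : C} (e : X ⟶ F.obj X ⨿ A) (h : A ⟶ B) (k : B ⟶ B'),
      bullet F e (h ≫ k) = bullet F (bullet F e h) k := by
    intro X A B B' e h k
    simp only [bullet, Category.assoc, coprod.map_map, Category.id_comp]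
  -- square commutes with bullet
  have hsq : ∀ {X Y Z W : C} (e : X ⟶ F.obj X ⨿ Y) (f : Y ⟶ F.obj Y ⨿ Z) (k : Z ⟶ W),
      square F e (bullet F f k) = bullet F (square F e f) k := by
    intro X Y Z W e f k
    simp only [square, bullet]
    apply coprod.hom_ext <;> simp
  refine ⟨aP, haP, haPuniq, solP, ⟨?_, ?_, ?_⟩, hpres, ?_, ?_⟩
  · -- solves
    intro X hX e
    obtain ⟨j, e', he⟩ := hfact hX e
    replace he : bullet F e' (K.ι.app j) = e := he
    have h1 : solP hX e = sol j hX e' ≫ K.ι.app j := by rw [← he]; exact hkey hX j e'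
    have hs := (hop j).solves hX e'
    have hcomm : coprod.map (𝟙 (F.obj X)) (K.ι.app j) ≫
          coprod.map (F.map (sol j hX e' ≫ K.ι.app j)) (𝟙 K.pt) ≫ coprod.desc aP (𝟙 K.pt)
        = coprod.map (F.map (sol j hX e')) (𝟙 (D.obj j)) ≫
          coprod.desc (a j) (𝟙 (D.obj j)) ≫ K.ι.app j := by
      apply coprod.hom_ext
      · simp [F.map_comp, ← haP j]
      · simp [← haP j]
    rw [h1, ← he]
    conv_lhs => rw [hs]
    rw [show bullet F e' (K.ι.app j) = e' ≫ coprod.map (𝟙 (F.obj X)) (K.ι.app j) from rfl]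
    simp only [Category.assoc]
    exact whisker_eq e' hcomm.symm
  · -- weak functoriality
    intro X Y Z hX hY hZ e f m hm h
    obtain ⟨j, h', hh⟩ := hom_surj hK (hpp Z hZ).some h
    rw [← hh, hbul e h' (K.ι.app j), hbul f h' (K.ι.app j), hkey hX j _, hkey hY j _,
      (hop j).weakFunctorial hX hY hZ e f m hm h', Category.assoc]
  · -- compositionality
    intro X Y hX hY hXY e f
    obtain ⟨j, f', hf⟩ := hfact hY f
    replace hf : bullet F f' (K.ι.app j) = f := hf
    rw [← hf, hkey hY j f', hbul e (sol j hY f') (K.ι.app j), hkey hX j _,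
      (hop j).compositional hX hY hXY e f', hsq e f' (K.ι.app j), hkey hXY j _,
      Category.assoc]
  · -- uniqueness of the solution operator
    intro solP' _ hpres'
    funext X hX e
    obtain ⟨j, e', he⟩ := hfact hX e
    replace he : bullet F e' (K.ι.app j) = e := he
    rw [← he, hpres' j hX e', hkey hX j e']
  · -- colimit property
    intro B b solB hB m hm hnat
    let cm : Cocone D :=
      { pt := B
        ι :=
          { app := m
            naturality := fun j j' f => by dsimp; rw [hnat f, Category.comp_id] } }
    have hfac : ∀ j, K.ι.app j ≫ hK.desc cm = m j := fun j => hK.fac cm j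
    refine ⟨hK.desc cm, ⟨?_, hfac⟩, ?_⟩
    · intro X hX e
      obtain ⟨j, e', he⟩ := hfact hX e
      replace he : bullet F e' (K.ι.app j) = e := he
      rw [← he, hkey hX j e', ← hbul e' (K.ι.app j) (hK.desc cm), hfac j, hm j hX e',
        Category.assoc, hfac j]
    · rintro h' ⟨-, hfac'⟩
      exact hK.uniq cm h' (fun j => hfac' j)
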